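/- For every δ > 0 there exists k ≥ 1 such that for every Hilbert space H with closed unit ball U, for all sets V, W and functions g : V → U, h : W → U, the function f(a,b) = ⟨g(a), h(b)⟩ is (k,δ)-stable; i.e., there are no a_1,…,a_k ∈ V and b_1,…,b_k ∈ W with |⟨g(a_i),h(b_j)⟩ − ⟨g(a_j),h(b_i)⟩| ≥ δ for all i < j. -/

import Mathlib

open Finset

/-- Min-homogeneous sequence extraction (pre-Ramsey). -/
lemma exists_minHomog (c : ℕ → ℕ → Bool) :
    ∀ (r : ℕ) (S : Finset ℕ), 2 ^ r ≤ S.card →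
      ∃ (p : Fin r → ℕ) (cl : Fin r → Bool), StrictMono p ∧ (∀ s, p s ∈ S) ∧
        ∀ s t : Fin r, s < t → c (p s) (p t) = cl s := by
  intro r
  induction r with
  | zero =>
    intro S _
    exact ⟨Fin.elim0, Fin.elim0, fun i => i.elim0, fun s => s.elim0, fun s => s.elim0⟩
  | succ r ih =>
    intro S hS
    have hne : S.Nonempty := by
      have : 0 < S.card := lt_of_lt_of_le (by positivity) hS
      exact Finset.card_pos.mp this
    set p0 := S.min' hne with hp0
    set T := S.filter (fun x => p0 < x) with hT
    have hsub : S ⊆ insert p0 T := by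
      intro x hx
      rcases eq_or_lt_of_le (S.min'_le x hx) with h | h
      · simp [h.symm, hp0]
      · exact Finset.mem_insert_of_mem (Finset.mem_filter.mpr ⟨hx, h⟩)
    have hTcard : 2 ^ (r + 1) - 1 ≤ T.card := by
      have := Finset.card_le_card hsub
      have h2 := Finset.card_insert_le p0 T
      omega
    set T1 := T.filter (fun x => c p0 x = true) with hT1
    set T2 := T.filter (fun x => ¬ (c p0 x = true)) with hT2
    have hsum : T1.card + T2.card = T.card :=
      Finset.card_filter_add_card_filter_not _
    have hpow : 2 ^ (r + 1) = 2 ^ r + 2 ^ r := by ring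
    have hbig : 2 ^ r ≤ T1.card ∨ 2 ^ r ≤ T2.card := by omega
    -- choose the big color class
    obtain ⟨T', b0, hT'card, hT'sub, hT'col⟩ :
        ∃ (T' : Finset ℕ) (b0 : Bool), 2 ^ r ≤ T'.card ∧ T' ⊆ T ∧
          ∀ x ∈ T', c p0 x = b0 := by
      rcases hbig with h | h
      · exact ⟨T1, true, h, Finset.filter_subset _ _,
          fun x hx => (Finset.mem_filter.mp hx).2⟩
      · refine ⟨T2, false, h, Finset.filter_subset _ _, fun x hx => ?_⟩
        have := (Finset.mem_filter.mp hx).2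
        simpa using this
    obtain ⟨p, cl, hmono, hmem, hcl⟩ := ih T' hT'card
    refine ⟨Fin.cases p0 p, Fin.cases b0 cl, ?_, ?_, ?_⟩
    · intro i j hij
      induction j using Fin.cases with
      | zero => exact absurd hij (Fin.not_lt_zero _).elim
      | succ j =>
        induction i using Fin.cases with
        | zero =>
          have : p j ∈ T := hT'sub (hmem j)
          simpa using (Finset.mem_filter.mp this).2
        | succ i =>
          exact hmono (Fin.succ_lt_succ_iff.mp hij)
    · intro s
      induction s using Fin.cases with
      | zero => exact S.min'_mem hne
      | succ s =>
        have : p s ∈ T := hT'sub (hmem s)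
        exact (Finset.mem_filter.mp this).1
    · intro s t hst
      induction t using Fin.cases with
      | zero => exact absurd hst (Fin.not_lt_zero _).elim
      | succ t =>
        induction s using Fin.cases with
        | zero =>
          simpa using hT'col _ (hmem t)
        | succ s =>
          simpa using hcl s t (Fin.succ_lt_succ_iff.mp hst)

/-- Monochromatic extraction. -/
lemma exists_mono (c : ℕ → ℕ → Bool) (m : ℕ) (S : Finset ℕ) (hS : 2 ^ (2 * m) ≤ S.card) :
    ∃ (e : Fin m → ℕ) (v : Bool), StrictMono e ∧ (∀ i, e i ∈ S) ∧
      ∀ i j : Fin m, i < j → c (e i) (e j) = v := by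
  obtain ⟨p, cl, hmono, hmem, hcl⟩ := exists_minHomog c (2 * m) S hS
  obtain ⟨v, hv⟩ : ∃ v : Bool, m ≤ (univ.filter (fun s : Fin (2 * m) => cl s = v)).card := by
    by_contra hcon
    push_neg at hcon
    have h1 := hcon true
    have h2 := hcon false
    have hsum : (univ.filter (fun s : Fin (2 * m) => cl s = true)).card
        + (univ.filter (fun s : Fin (2 * m) => ¬ (cl s = true))).card = Fintype.card (Fin (2 * m)) :=
      Finset.card_filter_add_card_filter_not _
    have hf : (univ.filter (fun s : Fin (2 * m) => ¬ (cl s = true)))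
        = (univ.filter (fun s : Fin (2 * m) => cl s = false)) := by
      apply Finset.filter_congr
      intro x _
      simp
    rw [hf] at hsum
    simp [Fintype.card_fin] at hsum
    omega
  set A := univ.filter (fun s : Fin (2 * m) => cl s = v) with hA
  set f := A.orderEmbOfCardLe hv with hfdef
  refine ⟨fun i => p (f i), v, ?_, fun i => hmem _, ?_⟩
  · intro i j hij
    exact hmono (f.strictMono hij)
  · intro i j hij
    have hfi : f i ∈ A := A.orderEmbOfCardLe_mem hv i
    have : cl (f i) = v := (Finset.mem_filter.mp hfi).2
    rw [← this]
    exact hcl _ _ (f.strictMono hij)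

/-- Energy increment: an order-property configuration of length `2^T` forces `M ≥ T δ²/2`. -/
lemma energy_increment {E : Type*} [NormedAddCommGroup E] [InnerProductSpace ℝ E]
    (δ : ℝ) (hδ : 0 ≤ δ) : ∀ (T n : ℕ), 2 ^ T ≤ n → ∀ (x g : Fin n → E) (M : ℝ),
    (∀ i, ‖x i‖ ^ 2 ≤ M) → (∀ t, ‖g t‖ ^ 2 ≤ 2) →
    (∀ i t : Fin n, (i : ℕ) ≤ t → δ ≤ (inner ℝ (x i) (g t) : ℝ)) →
    (∀ i t : Fin n, (t : ℕ) < i → (inner ℝ (x i) (g t) : ℝ) ≤ -δ) →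
    (T : ℝ) * (δ ^ 2 / 2) ≤ M := by
  intro T
  induction T with
  | zero =>
    intro n hn x g M hx _ _ _
    have h0 : (0 : ℕ) < n := by simp at hn; omega
    have := hx ⟨0, h0⟩
    push_cast
    nlinarith [sq_nonneg ‖x ⟨0, h0⟩‖]
  | succ T ih =>
    intro n hn x g M hx hg hpos hneg
    have hn2 : 2 ^ (T + 1) = 2 * 2 ^ T := by ring
    have hlt : ∀ s : Fin (2 ^ T), 2 * (s : ℕ) + 1 < n := by
      intro s
      have := s.isLt
      omega
    have hlt2 : ∀ s : Fin (2 ^ T), 2 * (s : ℕ) < n := fun s => by have := hlt s; omega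
    set x' : Fin (2 ^ T) → E :=
      fun s => (2 : ℝ)⁻¹ • (x ⟨2 * s, hlt2 s⟩ + x ⟨2 * s + 1, hlt s⟩) with hx'
    set g' : Fin (2 ^ T) → E := fun t => g ⟨2 * t + 1, hlt t⟩ with hg'
    have key : ∀ s : Fin (2 ^ T), ‖x' s‖ ^ 2 ≤ M - δ ^ 2 / 2 := by
      intro s
      set a := x ⟨2 * s, hlt2 s⟩
      set b := x ⟨2 * s + 1, hlt s⟩
      set w := g ⟨2 * s, hlt2 s⟩
      have h1 : δ ≤ (inner ℝ a w : ℝ) := hpos _ _ (le_refl _)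
      have h2 : (inner ℝ b w : ℝ) ≤ -δ := hneg _ _ (by simp)
      have hsep : 2 * δ ≤ (inner ℝ (a - b) w : ℝ) := by
        rw [inner_sub_left]; linarith
      have hcs : (inner ℝ (a - b) w : ℝ) ≤ ‖a - b‖ * ‖w‖ := real_inner_le_norm _ _
      have hwnn : (0:ℝ) ≤ ‖w‖ := norm_nonneg _
      have habnn : (0:ℝ) ≤ ‖a - b‖ := norm_nonneg _
      have hw2 : ‖w‖ ^ 2 ≤ 2 := hg _
      have hsep2 : 2 * δ ^ 2 ≤ ‖a - b‖ ^ 2 := by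
        have hprod : (2 * δ) ^ 2 ≤ (‖a - b‖ * ‖w‖) ^ 2 := by
          apply pow_le_pow_left₀ (by linarith) (le_trans hsep hcs)
        have : (‖a - b‖ * ‖w‖) ^ 2 = ‖a - b‖ ^ 2 * ‖w‖ ^ 2 := by ring
        nlinarith [sq_nonneg ‖a - b‖]
      have hpar : ‖a + b‖ ^ 2 + ‖a - b‖ ^ 2 = 2 * ‖a‖ ^ 2 + 2 * ‖b‖ ^ 2 := by
        have e1 := @norm_add_sq_real E _ _ a b
        have e2 := @norm_sub_sq_real E _ _ a b
        linarith
      have hxa := hx ⟨2 * s, hlt2 s⟩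
      have hxb := hx ⟨2 * s + 1, hlt s⟩
      have : ‖x' s‖ ^ 2 = (2:ℝ)⁻¹ ^ 2 * ‖a + b‖ ^ 2 := by
        rw [hx', norm_smul]
        simp [mul_pow]
        rfl
      rw [this]
      nlinarith
    have hIH := ih (2 ^ T) (le_refl _) x' g' (M - δ ^ 2 / 2) key
      (fun t => hg _)
      ?_ ?_
    · push_cast at hIH ⊢
      linarith
    · intro i t hit
      have e1 : δ ≤ (inner ℝ (x ⟨2 * i, hlt2 i⟩) (g' t) : ℝ) := hpos _ _ (by simp; omega)
      have e2 : δ ≤ (inner ℝ (x ⟨2 * i + 1, hlt i⟩) (g' t) : ℝ) := hpos _ _ (by simp; omega)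
      have : (inner ℝ (x' i) (g' t) : ℝ)
          = (2:ℝ)⁻¹ * (inner ℝ (x ⟨2 * i, hlt2 i⟩) (g' t) + inner ℝ (x ⟨2 * i + 1, hlt i⟩) (g' t)) := by
        rw [hx', inner_smul_left, inner_add_left]
        norm_num
      rw [this]
      linarith
    · intro i t hit
      have e1 : (inner ℝ (x ⟨2 * i, hlt2 i⟩) (g' t) : ℝ) ≤ -δ := hneg _ _ (by simp; omega)
      have e2 : (inner ℝ (x ⟨2 * i + 1, hlt i⟩) (g' t) : ℝ) ≤ -δ := hneg _ _ (by simp; omega)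
      have : (inner ℝ (x' i) (g' t) : ℝ)
          = (2:ℝ)⁻¹ * (inner ℝ (x ⟨2 * i, hlt2 i⟩) (g' t) + inner ℝ (x ⟨2 * i + 1, hlt i⟩) (g' t)) := by
        rw [hx', inner_smul_left, inner_add_left]
        norm_num
      rw [this]
      linarith

lemma order_config {H : Type} [NormedAddCommGroup H] [InnerProductSpace ℝ H]
    (δ : ℝ) (hδ : 0 ≤ δ) (T : ℕ) (u v : Fin (2 * 2 ^ T) → H)
    (hu : ∀ i, ‖u i‖ ≤ 1) (hv : ∀ i, ‖v i‖ ≤ 1)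
    (hd : ∀ i j : Fin (2 * 2 ^ T), (i : ℕ) < j →
      δ ≤ (inner ℝ (u i) (v j) : ℝ) - (inner ℝ (u j) (v i) : ℝ)) :
    (T : ℝ) * (δ ^ 2 / 2) ≤ 2 := by
  have hlt : ∀ s : Fin (2 ^ T), 2 * (s : ℕ) + 1 < 2 * 2 ^ T := by
    intro s; have := s.isLt; omega
  have hlt2 : ∀ s : Fin (2 ^ T), 2 * (s : ℕ) < 2 * 2 ^ T := by
    intro s; have := s.isLt; omega
  set x : Fin (2 ^ T) → WithLp 2 (H × H) :=
    fun s => (WithLp.equiv 2 (H × H)).symm (-(v ⟨2 * s, hlt2 s⟩), u ⟨2 * s, hlt2 s⟩) with hxdef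
  set g : Fin (2 ^ T) → WithLp 2 (H × H) :=
    fun t => (WithLp.equiv 2 (H × H)).symm (u ⟨2 * t + 1, hlt t⟩, v ⟨2 * t + 1, hlt t⟩) with hgdef
  have hinner : ∀ s t : Fin (2 ^ T), (inner ℝ (x s) (g t) : ℝ)
      = (inner ℝ (u ⟨2 * s, hlt2 s⟩) (v ⟨2 * t + 1, hlt t⟩) : ℝ)
        - (inner ℝ (u ⟨2 * t + 1, hlt t⟩) (v ⟨2 * s, hlt2 s⟩) : ℝ) := by
    intro s t
    rw [hxdef, hgdef]
    rw [WithLp.prod_inner_apply]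
    simp only [WithLp.equiv_symm_apply, WithLp.toLp_fst, WithLp.toLp_snd, inner_neg_left]
    linear_combination (real_inner_comm (v ⟨2 * s, hlt2 s⟩) (u ⟨2 * t + 1, hlt t⟩))
  have hxM : ∀ s, ‖x s‖ ^ 2 ≤ 2 := by
    intro s
    rw [hxdef, WithLp.prod_norm_sq_eq_of_L2]
    simp only [WithLp.equiv_symm_apply, WithLp.toLp_fst, WithLp.toLp_snd, norm_neg]
    nlinarith [hu ⟨2 * s, hlt2 s⟩, hv ⟨2 * s, hlt2 s⟩, norm_nonneg (u ⟨2 * s, hlt2 s⟩),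
      norm_nonneg (v ⟨2 * s, hlt2 s⟩)]
  have hgM : ∀ t, ‖g t‖ ^ 2 ≤ 2 := by
    intro t
    rw [hgdef, WithLp.prod_norm_sq_eq_of_L2]
    simp only [WithLp.equiv_symm_apply, WithLp.toLp_fst, WithLp.toLp_snd]
    nlinarith [hu ⟨2 * t + 1, hlt t⟩, hv ⟨2 * t + 1, hlt t⟩, norm_nonneg (u ⟨2 * t + 1, hlt t⟩),
      norm_nonneg (v ⟨2 * t + 1, hlt t⟩)]
  refine energy_increment δ hδ T (2 ^ T) le_rfl x g 2 hxM hgM ?_ ?_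
  · intro i t hit
    rw [hinner]
    have := hd ⟨2 * i, hlt2 i⟩ ⟨2 * t + 1, hlt t⟩ (by simp; omega)
    linarith
  · intro i t hit
    rw [hinner]
    have := hd ⟨2 * t + 1, hlt t⟩ ⟨2 * i, hlt2 i⟩ (by simp; omega)
    linarith

theorem inner_product_stable (δ : ℝ) (hδ : 0 < δ) :
    ∃ k : ℕ, 1 ≤ k ∧
      ∀ (H : Type) [NormedAddCommGroup H] [InnerProductSpace ℝ H] [CompleteSpace H]
        (V W : Type) (g : V → H) (h : W → H),
        (∀ a, ‖g a‖ ≤ 1) → (∀ b, ‖h b‖ ≤ 1) →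
        ¬ ∃ (a : Fin k → V) (b : Fin k → W), ∀ i j : Fin k, i < j →
          δ ≤ |(inner ℝ (g (a i)) (h (b j)) : ℝ) - (inner ℝ (g (a j)) (h (b i)) : ℝ)| := by
  set T : ℕ := ⌈(4 : ℝ) / δ ^ 2⌉₊ + 1 with hTdef
  set m : ℕ := 2 * 2 ^ T with hmdef
  set k : ℕ := 2 ^ (2 * m) with hkdef
  have hk : 0 < k := Nat.pow_pos (by norm_num)
  refine ⟨k, hk, ?_⟩
  intro H _ _ _ V W g h hg hh
  rintro ⟨a, b, hab⟩
  set a' : ℕ → V := fun i => a ⟨i % k, Nat.mod_lt i hk⟩ with ha'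
  set b' : ℕ → W := fun i => b ⟨i % k, Nat.mod_lt i hk⟩ with hb'
  set D : ℕ → ℕ → ℝ := fun i j =>
    (inner ℝ (g (a' i)) (h (b' j)) : ℝ) - (inner ℝ (g (a' j)) (h (b' i)) : ℝ) with hD
  set c : ℕ → ℕ → Bool := fun i j => decide (δ ≤ D i j) with hc
  obtain ⟨e, vcol, hmono, hmem, hcol⟩ := exists_mono c m (Finset.range k) (by simp [hkdef])
  have hek : ∀ i, e i < k := fun i => Finset.mem_range.mp (hmem i)
  have habs : ∀ i j : Fin m, (i : ℕ) < (j : ℕ) → δ ≤ |D (e i) (e j)| := by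
    intro i j hij
    have hlt : i < j := hij
    have helt : e i < e j := hmono hlt
    have h1 : (⟨e i % k, Nat.mod_lt _ hk⟩ : Fin k) < ⟨e j % k, Nat.mod_lt _ hk⟩ := by
      simp only [Fin.mk_lt_mk]
      rw [Nat.mod_eq_of_lt (hek i), Nat.mod_eq_of_lt (hek j)]
      exact helt
    exact hab _ _ h1
  have hanti : ∀ i j : ℕ, D i j = -D j i := by
    intro i j; simp only [hD]; ring
  have hfinal : (T : ℝ) * (δ ^ 2 / 2) ≤ 2 := by
    cases vcol with
    | true =>
      refine order_config δ hδ.le T (fun i => g (a' (e i))) (fun i => h (b' (e i)))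
        (fun i => hg _) (fun i => hh _) ?_
      intro i j hij
      have hlt : i < j := hij
      have := hcol i j hlt
      have := of_decide_eq_true this
      exact this
    | false =>
      have hm1 : 1 ≤ m := by
        rw [hmdef]
        have : 0 < 2 ^ T := Nat.pow_pos (by norm_num)
        omega
      set rev : Fin m → Fin m := fun i => ⟨m - 1 - i, by omega⟩ with hrev
      refine order_config δ hδ.le T (fun i => g (a' (e (rev i)))) (fun i => h (b' (e (rev i))))
        (fun i => hg _) (fun i => hh _) ?_
      intro i j hij
      have hji : rev j < rev i := by
        simp only [hrev, Fin.mk_lt_mk]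
        have := i.isLt; have := j.isLt
        omega
      have hcval := hcol (rev j) (rev i) hji
      have hneg : ¬ (δ ≤ D (e (rev j)) (e (rev i))) := of_decide_eq_false hcval
      have habs' := habs (rev j) (rev i) hji
      have : D (e (rev j)) (e (rev i)) ≤ -δ := by
        rcases abs_cases (D (e (rev j)) (e (rev i))) with ⟨heq, _⟩ | ⟨heq, _⟩ <;>
          rw [heq] at habs'
        · exact absurd habs' hneg
        · linarith
      have := hanti (e (rev j)) (e (rev i))
      show δ ≤ D (e (rev i)) (e (rev j))
      linarith
  -- arithmetic contradiction
  have hTge : (4 : ℝ) / δ ^ 2 + 1 ≤ (T : ℝ) := by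
    have := Nat.le_ceil ((4 : ℝ) / δ ^ 2)
    push_cast [hTdef]
    linarith
  have h4 : (4 : ℝ) / δ ^ 2 * δ ^ 2 = 4 := div_mul_cancel₀ _ (by positivity)
  nlinarith [sq_nonneg δ, hfinal, hTge]
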